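/- Let ω, σ be doubling measures on ℝⁿ with doubling constants K_ω, K_σ and reverse doubling constants 1+δ_ω, 1+δ_σ respectively. If K_σ < 2^p(1+δ_ω), then finiteness of the classical two-weight A_p constant implies the pivotal condition: for every cube I_0 and disjoint decomposition I_0 = ∪_r I_r, ∑_r ω(I_r) P(I_r, 1_{I_0}σ)^p ≤ C · A_p(ω,σ) · σ(I_0). -/

import Mathlib

open MeasureTheory ENNReal

structure Cube (n : ℕ) where
  c : Fin n → ℝ
  r : ℝ
  hr : 0 < r

namespace Cube

def set {n : ℕ} (I : Cube n) : Set (Fin n → ℝ) :=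
  {x | ∀ i, I.c i - I.r ≤ x i ∧ x i < I.c i + I.r}

noncomputable def side {n : ℕ} (I : Cube n) : ℝ := 2 * I.r

noncomputable def vol {n : ℕ} (I : Cube n) : ℝ := (2 * I.r) ^ n

def double {n : ℕ} (I : Cube n) : Cube n := ⟨I.c, 2 * I.r, by have := I.hr; linarith⟩

def triple {n : ℕ} (I : Cube n) : Cube n := ⟨I.c, 3 * I.r, by have := I.hr; linarith⟩

end Cube

noncomputable def poisson {n : ℕ} (I : Cube n) (ω : Measure (Fin n → ℝ)) : ℝ≥0∞ :=
  ∫⁻ x, (ENNReal.ofReal (I.side / (I.side + Metric.infDist x I.set) ^ 2)) ^ n ∂ω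

noncomputable def maximal {n : ℕ} (μ : Measure (Fin n → ℝ)) (x : Fin n → ℝ) : ℝ≥0∞ :=
  ⨆ (I : Cube n) (_ : x ∈ I.set), μ I.set / ENNReal.ofReal I.vol

noncomputable def wMass {n : ℕ} (w : (Fin n → ℝ) → ℝ≥0∞) (E : Set (Fin n → ℝ)) : ℝ≥0∞ :=
  ∫⁻ x in E, w x


/-- A dyadic cube `∏ᵢ [posᵢ 2ᵏ, (posᵢ+1) 2ᵏ)` in `ℝⁿ`. -/
structure DyadicCube (n : ℕ) where
  k : ℤ
  pos : Fin n → ℤ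

namespace DyadicCube

def set {n : ℕ} (D : DyadicCube n) : Set (Fin n → ℝ) :=
  {x | ∀ i, (D.pos i : ℝ) * (2:ℝ) ^ D.k ≤ x i ∧ x i < ((D.pos i : ℝ) + 1) * (2:ℝ) ^ D.k}

noncomputable def vol {n : ℕ} (D : DyadicCube n) : ℝ := ((2:ℝ) ^ D.k) ^ n

end DyadicCube

/-- The dyadic maximal function of a measure. -/
noncomputable def dyadicMaximal {n : ℕ} (μ : Measure (Fin n → ℝ)) (x : Fin n → ℝ) : ℝ≥0∞ :=
  ⨆ (D : DyadicCube n) (_ : x ∈ D.set), μ D.set / ENNReal.ofReal D.vol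

/-- The classical two-weight `A_p` characteristic. -/
noncomputable def Ap {n : ℕ} (p : ℝ) (ω σ : Measure (Fin n → ℝ)) : ℝ≥0∞ :=
  ⨆ I : Cube n, (ω I.set / ENNReal.ofReal I.vol) ^ (1 / p) *
    (σ I.set / ENNReal.ofReal I.vol) ^ (1 - 1 / p)

/-- The `A_∞` condition for a measure: `σ(E)/σ(I) ≤ C (|E|/|I|)^ε`. -/
def IsAInfty {n : ℕ} (σ : Measure (Fin n → ℝ)) : Prop :=
  ∃ C > (0:ℝ), ∃ ε > (0:ℝ), ∀ I : Cube n, ∀ E : Set (Fin n → ℝ),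
    E ⊆ I.set → MeasurableSet E →
    σ E ≤ ENNReal.ofReal (C * ((volume E).toReal / I.vol) ^ ε) * σ I.set

namespace S13
variable {n : ℕ}

variable {n : ℕ}

lemma measurableSet_cube (I : Cube n) : MeasurableSet I.set := by
  have : I.set = ⋂ i, (fun x : Fin n → ℝ => x i) ⁻¹' (Set.Ico (I.c i - I.r) (I.c i + I.r)) := by
    ext x; simp [Cube.set, Set.mem_iInter, Set.mem_Ico]
  rw [this]
  exact MeasurableSet.iInter fun i => (measurable_pi_apply i) measurableSet_Ico

lemma center_mem (I : Cube n) : I.c ∈ I.set := by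
  intro i; constructor <;> [linarith [I.hr]; linarith [I.hr]]

lemma cube_nonempty (I : Cube n) : I.set.Nonempty := ⟨I.c, center_mem I⟩

lemma subset_closedBall (I : Cube n) : I.set ⊆ Metric.closedBall I.c I.r := by
  intro x hx
  rw [Metric.mem_closedBall]
  rw [dist_pi_le_iff I.hr.le]
  intro i
  obtain ⟨h1, h2⟩ := hx i
  rw [Real.dist_eq, abs_le]
  constructor <;> linarith

lemma cube_meas_lt_top (μ : Measure (Fin n → ℝ)) [IsLocallyFiniteMeasure μ] (I : Cube n) :
    μ I.set < ∞ :=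
  lt_of_le_of_lt (measure_mono (subset_closedBall I))
    (isCompact_closedBall I.c I.r).measure_lt_top

lemma double_iterate (I : Cube n) (m : ℕ) :
    (Cube.double^[m] I).c = I.c ∧ (Cube.double^[m] I).r = 2 ^ m * I.r := by
  induction m with
  | zero => simp
  | succ m ih =>
    rw [Function.iterate_succ_apply']
    refine ⟨ih.1, ?_⟩
    show 2 * (Cube.double^[m] I).r = 2 ^ (m+1) * I.r
    rw [ih.2]; ring

lemma set_subset {I J : Cube n} (hc : I.c = J.c) (hr : I.r ≤ J.r) : I.set ⊆ J.set := by
  intro x hx i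
  obtain ⟨h1, h2⟩ := hx i
  rw [← hc]
  constructor <;> linarith

lemma B_mono (I : Cube n) {k l : ℕ} (h : k ≤ l) :
    (Cube.double^[k] I).set ⊆ (Cube.double^[l] I).set := by
  apply set_subset
  · rw [(double_iterate I k).1, (double_iterate I l).1]
  · rw [(double_iterate I k).2, (double_iterate I l).2]
    have := I.hr
    have : (2:ℝ)^k ≤ 2^l := pow_le_pow_right₀ one_le_two h
    nlinarith [I.hr]

lemma exists_mem_double (I : Cube n) (x : Fin n → ℝ) : ∃ k, x ∈ (Cube.double^[k] I).set := by
  obtain ⟨k, hk⟩ := pow_unbounded_of_one_lt (dist x I.c / I.r) (one_lt_two (α := ℝ))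
  refine ⟨k, fun i => ?_⟩
  rw [(double_iterate I k).1, (double_iterate I k).2]
  have hd : dist x I.c < 2 ^ k * I.r := by
    rw [div_lt_iff₀ I.hr] at hk; linarith
  have hi : |x i - I.c i| ≤ dist x I.c := by
    have := dist_le_pi_dist x I.c i
    rwa [Real.dist_eq] at this
  rw [abs_le] at hi
  constructor <;> nlinarith

lemma infDist_lower (I : Cube n) (k : ℕ) (x : Fin n → ℝ)
    (hx : x ∉ (Cube.double^[k] I).set) :
    ((2:ℝ) ^ k - 1) * I.r ≤ Metric.infDist x I.set := by
  by_contra h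
  push_neg at h
  obtain ⟨y, hy, hxy⟩ := (Metric.infDist_lt_iff (cube_nonempty I)).mp h
  apply hx
  intro i
  rw [(double_iterate I k).1, (double_iterate I k).2]
  obtain ⟨h1, h2⟩ := hy i
  have hi : |x i - y i| ≤ dist x y := by
    have := dist_le_pi_dist x y i
    rwa [Real.dist_eq] at this
  rw [abs_le] at hi
  have h2k : (1:ℝ) ≤ 2 ^ k := one_le_pow₀ one_le_two
  constructor <;> nlinarith [I.hr]


lemma kernel_real_bound {r d : ℝ} (hr : 0 < r) (m : ℕ) (hd : ((2:ℝ)^m - 1) * r ≤ d)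
    (hd0 : 0 ≤ d) : 2*r / (2*r + d)^2 ≤ 8 / (4^m * r) := by
  have h2m : (1:ℝ) ≤ 2^m := one_le_pow₀ one_le_two
  have h1 : (2:ℝ)^m * r ≤ 2*r + d := by nlinarith
  have h4 : ((2:ℝ)^m * r)^2 = 4^m * r^2 := by
    rw [mul_pow, ← pow_mul, mul_comm m 2, pow_mul]; norm_num
  have hpos : (0:ℝ) < 4^m * r := by positivity
  have h2 : (4:ℝ)^m * r^2 ≤ (2*r + d)^2 := by
    rw [← h4]; apply pow_le_pow_left₀ (by positivity) h1
  calc 2*r / (2*r + d)^2 ≤ 2*r / (4^m * r^2) := by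
        apply div_le_div_of_nonneg_left (by linarith) (by positivity) h2
    _ = 2 / (4^m * r) := by field_simp
    _ ≤ 8 / (4^m * r) := by gcongr; norm_num

lemma poisson_le (I : Cube n) (μ : Measure (Fin n → ℝ)) :
    poisson I μ ≤ ∑' m : ℕ, ENNReal.ofReal ((8 / (4^m * I.r))^n) * μ ((Cube.double^[m+1] I).set) := by
  classical
  set B : ℕ → Set (Fin n → ℝ) := fun m => (Cube.double^[m] I).set with hB
  set A : ℕ → Set (Fin n → ℝ) := fun m => if m = 0 then B 1 else B (m+1) \ B m with hA
  have hAB : ∀ m, A m ⊆ B (m+1) := by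
    intro m
    by_cases h : m = 0
    · subst h; rw [hA]; simp
    · rw [hA]; simp only [if_neg h]; exact Set.diff_subset
  have hAmeas : ∀ m, MeasurableSet (A m) := by
    intro m
    rw [hA]
    by_cases h : m = 0
    · simp only [h, if_pos]
      exact measurableSet_cube _
    · simp only [if_neg h]
      exact (measurableSet_cube _).diff (measurableSet_cube _)
  have hk : ∀ m, ∀ x ∈ A m,
      (ENNReal.ofReal (I.side / (I.side + Metric.infDist x I.set) ^ 2)) ^ n
        ≤ ENNReal.ofReal ((8 / (4^m * I.r))^n) := by
    intro m x hx
    have hd0 : 0 ≤ Metric.infDist x I.set := Metric.infDist_nonneg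
    have hd : ((2:ℝ)^m - 1) * I.r ≤ Metric.infDist x I.set := by
      by_cases h : m = 0
      · subst h; simpa using hd0
      · have hxB : x ∉ B m := by
          rw [hA] at hx; simp only [if_neg h] at hx; exact hx.2
        exact infDist_lower I m x hxB
    have hkr := kernel_real_bound I.hr m hd hd0
    calc (ENNReal.ofReal (I.side / (I.side + Metric.infDist x I.set) ^ 2)) ^ n
        ≤ (ENNReal.ofReal (8 / (4^m * I.r))) ^ n :=
          pow_le_pow_left₀ zero_le
            (ENNReal.ofReal_le_ofReal (by simpa [Cube.side] using hkr)) n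
      _ = ENNReal.ofReal ((8 / (4^m * I.r))^n) := by
          have hrpos : (0:ℝ) < I.r := I.hr
          rw [← ENNReal.ofReal_pow (by positivity)]
  have hpt : ∀ x, (ENNReal.ofReal (I.side / (I.side + Metric.infDist x I.set) ^ 2)) ^ n
      ≤ ∑' m, (A m).indicator (fun _ => ENNReal.ofReal ((8 / (4^m * I.r))^n)) x := by
    intro x
    by_cases hx1 : x ∈ B 1
    · have hx : x ∈ A 0 := by rw [hA]; simpa using hx1
      refine le_trans (hk 0 x hx) ?_
      rw [← Set.indicator_of_mem hx (fun _ => ENNReal.ofReal ((8 / (4^(0:ℕ) * I.r))^n))]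
      exact ENNReal.le_tsum 0
    · have hex := exists_mem_double I x
      have hk2 : 2 ≤ Nat.find hex := by
        rw [Nat.le_find_iff]
        intro j hj
        have : j = 0 ∨ j = 1 := by omega
        rcases this with rfl | rfl
        · exact fun h => hx1 (B_mono I (by omega) h)
        · exact hx1
      have hxk : x ∈ B (Nat.find hex) := Nat.find_spec hex
      have hxm : x ∉ B (Nat.find hex - 1) := Nat.find_min hex (by omega)
      have hxA : x ∈ A (Nat.find hex - 1) := by
        rw [hA]; simp only [if_neg (by omega : ¬ Nat.find hex - 1 = 0)]
        exact ⟨by rwa [show Nat.find hex - 1 + 1 = Nat.find hex from by omega], hxm⟩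
      refine le_trans (hk _ x hxA) ?_
      rw [← Set.indicator_of_mem hxA (fun _ => ENNReal.ofReal ((8 / (4^(Nat.find hex - 1) * I.r))^n))]
      exact ENNReal.le_tsum _
  calc poisson I μ
      ≤ ∫⁻ x, ∑' m, (A m).indicator (fun _ => ENNReal.ofReal ((8 / (4^m * I.r))^n)) x ∂μ :=
        lintegral_mono hpt
    _ = ∑' m, ∫⁻ x, (A m).indicator (fun _ => ENNReal.ofReal ((8 / (4^m * I.r))^n)) x ∂μ :=
        lintegral_tsum (fun m => (measurable_const.indicator (hAmeas m)).aemeasurable)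
    _ = ∑' m, ENNReal.ofReal ((8 / (4^m * I.r))^n) * μ (A m) := by
        apply tsum_congr
        intro m
        rw [lintegral_indicator_const (hAmeas m)]
    _ ≤ ∑' m, ENNReal.ofReal ((8 / (4^m * I.r))^n) * μ (B (m+1)) :=
        ENNReal.tsum_le_tsum fun m => mul_le_mul_right (measure_mono (hAB m)) _



-- Hölder for tsum over ℕ
lemma tsum_holder {p q : ℝ} (hpq : p.HolderConjugate q) (f g : ℕ → ℝ≥0∞) :
    ∑' m, f m * g m ≤ (∑' m, f m ^ p) ^ (1/p) * (∑' m, g m ^ q) ^ (1/q) := by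
  have h := ENNReal.lintegral_mul_le_Lp_mul_Lq (Measure.count (α := ℕ)) hpq
    (measurable_from_top (f := f)).aemeasurable (measurable_from_top (f := g)).aemeasurable
  simpa [MeasureTheory.lintegral_count] using h

lemma geom_sum {γ : ℝ} (hγ0 : 0 ≤ γ) :
    ∑' m : ℕ, ENNReal.ofReal (γ ^ m) = (1 - ENNReal.ofReal γ)⁻¹ := by
  rw [← ENNReal.tsum_geometric]
  congr 1; ext m; rw [← ENNReal.ofReal_pow hγ0]

lemma geom_ne_top {γ : ℝ} (hγ1 : γ < 1) : (1 - ENNReal.ofReal γ)⁻¹ ≠ ∞ := by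
  rw [Ne, ENNReal.inv_eq_top, tsub_eq_zero_iff_le]
  intro h
  have := ENNReal.one_le_ofReal.mp h
  linarith

-- key ENNReal algebra
lemma mul_rpow_le {p : ℝ} (hp : 1 < p) {a b V A : ℝ≥0∞} (hb : b ≠ ∞) (hV0 : V ≠ 0) (hV : V ≠ ∞)
    (h : a / V * (b / V) ^ (p - 1) ≤ A) : a * b ^ p ≤ A * (V ^ p * b) := by
  have hp0 : (0:ℝ) < p := by linarith
  rcases eq_or_ne b 0 with hb0 | hb0
  · simp [hb0, ENNReal.zero_rpow_of_pos hp0]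
  have hVp0 : V ^ (p-1) ≠ 0 := (ENNReal.rpow_pos (pos_iff_ne_zero.mpr hV0) hV).ne'
  have hVpt : V ^ (p-1) ≠ ∞ := ENNReal.rpow_ne_top_of_nonneg (by linarith) hV
  have hV1 : V⁻¹ * V = 1 := ENNReal.inv_mul_cancel hV0 hV
  have hVp1 : (V ^ (p-1))⁻¹ * V ^ (p-1) = 1 := ENNReal.inv_mul_cancel hVp0 hVpt
  have hVsplit : V ^ p = V ^ (p-1) * V := by
    have h1 : V ^ (p-1) * V = V ^ (p-1) * V ^ (1:ℝ) := by rw [ENNReal.rpow_one]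
    rw [h1, ← ENNReal.rpow_add _ _ hV0 hV]; norm_num
  have hbsplit : b ^ (p-1) * b = b ^ p := by
    nth_rewrite 2 [← ENNReal.rpow_one b]
    rw [← ENNReal.rpow_add _ _ hb0 hb]; norm_num
  have key : a / V * (b / V) ^ (p-1) * (V ^ p * b) = a * b ^ p := by
    rw [ENNReal.div_rpow_of_nonneg _ _ (by linarith : (0:ℝ) ≤ p - 1)]
    rw [div_eq_mul_inv, div_eq_mul_inv, hVsplit]
    calc a * V⁻¹ * (b ^ (p-1) * (V ^ (p-1))⁻¹) * (V ^ (p-1) * V * b)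
        = (a * (b ^ (p-1) * b)) * ((V⁻¹ * V) * ((V ^ (p-1))⁻¹ * V ^ (p-1))) := by ring
      _ = a * b ^ p := by rw [hV1, hVp1, hbsplit]; ring
  rw [← key]
  exact mul_le_mul_left h _


lemma sigma_iter {σ : Measure (Fin n → ℝ)} {Kσ : ℝ} (hK : 0 ≤ Kσ)
    (hdσ : ∀ I : Cube n, σ I.double.set ≤ ENNReal.ofReal Kσ * σ I.set) (I : Cube n) (m : ℕ) :
    σ (Cube.double^[m] I).set ≤ ENNReal.ofReal (Kσ ^ m) * σ I.set := by
  induction m with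
  | zero => simp
  | succ m ih =>
    rw [Function.iterate_succ_apply']
    calc σ (Cube.double^[m] I).double.set
        ≤ ENNReal.ofReal Kσ * σ (Cube.double^[m] I).set := hdσ _
      _ ≤ ENNReal.ofReal Kσ * (ENNReal.ofReal (Kσ^m) * σ I.set) := mul_le_mul_right ih _
      _ = ENNReal.ofReal (Kσ^(m+1)) * σ I.set := by
          rw [← mul_assoc, ← ENNReal.ofReal_mul hK, ← pow_succ']

lemma omega_iter {ω : Measure (Fin n → ℝ)} {δω : ℝ} (hδ : 0 ≤ δω)
    (hrω : ∀ I : Cube n, ENNReal.ofReal (1 + δω) * ω I.set ≤ ω I.double.set) (I : Cube n) (m : ℕ) :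
    ENNReal.ofReal ((1+δω) ^ m) * ω I.set ≤ ω (Cube.double^[m] I).set := by
  induction m with
  | zero => simp
  | succ m ih =>
    rw [Function.iterate_succ_apply']
    calc ENNReal.ofReal ((1+δω)^(m+1)) * ω I.set
        = ENNReal.ofReal (1+δω) * (ENNReal.ofReal ((1+δω)^m) * ω I.set) := by
          rw [← mul_assoc, ← ENNReal.ofReal_mul (by linarith), ← pow_succ']
      _ ≤ ENNReal.ofReal (1+δω) * ω (Cube.double^[m] I).set := mul_le_mul_right ih _
      _ ≤ ω (Cube.double^[m] I).double.set := hrω _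

lemma ap_bound {p : ℝ} (hp : 1 < p) (ω σ : Measure (Fin n → ℝ)) (J : Cube n) :
    ω J.set / ENNReal.ofReal J.vol * (σ J.set / ENNReal.ofReal J.vol) ^ (p - 1)
      ≤ (Ap p ω σ) ^ p := by
  have hp0 : (0:ℝ) < p := by linarith
  have h : (ω J.set / ENNReal.ofReal J.vol) ^ (1/p) *
      (σ J.set / ENNReal.ofReal J.vol) ^ (1 - 1/p) ≤ Ap p ω σ :=
    le_iSup (fun I : Cube n => (ω I.set / ENNReal.ofReal I.vol) ^ (1/p) *
      (σ I.set / ENNReal.ofReal I.vol) ^ (1 - 1/p)) J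
  have h2 := ENNReal.rpow_le_rpow h hp0.le
  rw [ENNReal.mul_rpow_of_nonneg _ _ hp0.le, ← ENNReal.rpow_mul, ← ENNReal.rpow_mul,
    show 1/p*p = 1 by field_simp, show (1-1/p)*p = p-1 by field_simp,
    ENNReal.rpow_one] at h2
  exact h2

set_option maxHeartbeats 1600000 in
lemma core (hn : 0 < n) {p : ℝ} (hp : 1 < p)
    (ω σ : Measure (Fin n → ℝ)) [IsLocallyFiniteMeasure ω] [IsLocallyFiniteMeasure σ]
    {Kσ δω : ℝ} (hKσ : 0 < Kσ) (hδω : 0 < δω)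
    (hdσ : ∀ I : Cube n, σ I.double.set ≤ ENNReal.ofReal Kσ * σ I.set)
    (hrω : ∀ I : Cube n, ENNReal.ofReal (1 + δω) * ω I.set ≤ ω I.double.set)
    (hsmall : Kσ < (2:ℝ) ^ p * (1 + δω)) :
    ∃ K : ℝ≥0∞, K ≠ ∞ ∧ ∀ I : Cube n,
      ω I.set * (poisson I σ) ^ p ≤ K * (Ap p ω σ) ^ p * σ I.set := by
  have hp0 : (0:ℝ) < p := by linarith
  have hδ : (0:ℝ) < 1 + δω := by linarith
  have h2n : (2:ℝ) ≤ 2^n := by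
    calc (2:ℝ) = 2^1 := (pow_one 2).symm
      _ ≤ 2^n := pow_le_pow_right₀ one_le_two hn
  have h2n0 : (0:ℝ) < 2^n := by positivity
  have h2np0 : (0:ℝ) < ((2:ℝ)^n) ^ p := Real.rpow_pos_of_pos h2n0 p
  have h2p : (2:ℝ)^p ≤ ((2:ℝ)^n)^p := Real.rpow_le_rpow (by norm_num) h2n hp0.le
  set t : ℝ := Kσ / (((2:ℝ)^n)^p * (1+δω)) with ht
  have ht0 : 0 < t := by
    apply div_pos hKσ
    positivity
  have ht1 : t < 1 := by
    rw [ht, div_lt_one (by positivity)]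
    nlinarith
  set β : ℝ := t ^ (1/(2*p)) with hβ
  have hβ0 : 0 < β := Real.rpow_pos_of_pos ht0 _
  have hβ1 : β < 1 := Real.rpow_lt_one ht0.le ht1 (by positivity)
  have hβp : β ^ p = t ^ (1/2 : ℝ) := by
    rw [hβ, ← Real.rpow_mul ht0.le]
    congr 1
    field_simp
  set ρ : ℝ := t ^ (1/2 : ℝ) with hρ
  have hρ0 : 0 < ρ := Real.rpow_pos_of_pos ht0 _
  have hρ1 : ρ < 1 := Real.rpow_lt_one ht0.le ht1 (by norm_num)
  have hp1 : p ≠ 0 := hp0.ne'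
  have hpm1 : p - 1 ≠ 0 := by intro h; apply hp.ne'; linarith
  set q : ℝ := p/(p-1) with hq
  have hpq : p.HolderConjugate q := by
    exact (Real.holderConjugate_iff_eq_conjExponent hp).2 hq
  have hq0 : 0 < q := hpq.symm.pos
  set γ : ℝ := β ^ q with hγ
  have hγ0 : 0 < γ := Real.rpow_pos_of_pos hβ0 _
  have hγ1 : γ < 1 := Real.rpow_lt_one hβ0.le hβ1 hq0
  set G : ℝ≥0∞ := (1 - ENNReal.ofReal γ)⁻¹ with hG
  have hGt : G ≠ ∞ := geom_ne_top hγ1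
  set E : ℝ := ((32:ℝ)^n)^p * (Kσ/(1+δω)) with hE
  have hE0 : 0 < E := by
    apply mul_pos (Real.rpow_pos_of_pos (by positivity) p)
    exact div_pos hKσ hδ
  set H : ℝ≥0∞ := ENNReal.ofReal E * (1 - ENNReal.ofReal ρ)⁻¹ with hH
  have hHt : H ≠ ∞ := ENNReal.mul_ne_top ENNReal.ofReal_ne_top (geom_ne_top hρ1)
  refine ⟨G ^ (p-1) * H, ENNReal.mul_ne_top
    (ENNReal.rpow_ne_top_of_nonneg (by linarith) hGt) hHt, ?_⟩
  intro I
  have hr : (0:ℝ) < I.r := I.hr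
  set c : ℕ → ℝ := fun m => (8 / (4^m * I.r))^n with hc
  have hc0 : ∀ m, 0 < c m := fun m => by rw [hc]; positivity
  set u : ℕ → ℝ≥0∞ := fun m => ENNReal.ofReal (β^m) with hu
  set v : ℕ → ℝ≥0∞ := fun m =>
    ENNReal.ofReal (c m / β^m) * σ (Cube.double^[m+1] I).set with hv
  set S : ℝ≥0∞ := ∑' m, ENNReal.ofReal (c m) * σ (Cube.double^[m+1] I).set with hS
  have hP : poisson I σ ≤ S := poisson_le I σ
  -- Hölder
  have huv : ∀ m, ENNReal.ofReal (c m) * σ (Cube.double^[m+1] I).set = v m * u m := by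
    intro m
    rw [hv, hu]
    rw [mul_comm _ (ENNReal.ofReal (β^m)), ← mul_assoc, ← ENNReal.ofReal_mul (by positivity)]
    congr 2
    rw [mul_comm, div_mul_cancel₀]
    exact pow_ne_zero m hβ0.ne'
  have huq : ∀ m, u m ^ q = ENNReal.ofReal γ ^ m := by
    intro m
    rw [hu]
    rw [ENNReal.ofReal_rpow_of_pos (pow_pos hβ0 m), ← ENNReal.ofReal_pow hγ0.le]
    congr 1
    rw [hγ, ← Real.rpow_natCast β m, ← Real.rpow_mul hβ0.le, mul_comm (m:ℝ) q,
      Real.rpow_mul hβ0.le, Real.rpow_natCast]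
  have hsumU : ∑' m, u m ^ q = G := by
    rw [hG, ← ENNReal.tsum_geometric]
    exact tsum_congr huq
  have hHolder : S ≤ (∑' m, v m ^ p) ^ (1/p) * G ^ (1/q) := by
    rw [hS, ← hsumU]
    calc ∑' m, ENNReal.ofReal (c m) * σ (Cube.double^[m+1] I).set
        = ∑' m, v m * u m := tsum_congr huv
      _ ≤ (∑' m, v m ^ p) ^ (1/p) * (∑' m, u m ^ q) ^ (1/q) := tsum_holder hpq v u
  have hSp : S ^ p ≤ (∑' m, v m ^ p) * G ^ (p-1) := by
    calc S ^ p ≤ ((∑' m, v m ^ p) ^ (1/p) * G ^ (1/q)) ^ p :=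
          ENNReal.rpow_le_rpow hHolder hp0.le
      _ = (∑' m, v m ^ p) * G ^ (p-1) := by
          rw [ENNReal.mul_rpow_of_nonneg _ _ hp0.le, ← ENNReal.rpow_mul, ← ENNReal.rpow_mul,
            show 1/p*p = 1 by field_simp,
            show 1/q*p = p-1 by rw [show 1/q*p = p/q by ring, hpq.div_conj_eq_sub_one],
            ENNReal.rpow_one]
  -- per-term bound
  have hterm : ∀ m : ℕ, ω I.set * v m ^ p ≤
      ENNReal.ofReal (E * ρ^m) * (Ap p ω σ) ^ p * σ I.set := by
    intro m
    set J : Cube n := Cube.double^[m+1] I with hJ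
    have hJr : J.r = 2^(m+1) * I.r := (double_iterate I (m+1)).2
    have hJvol : J.vol = (2^(m+2) * I.r)^n := by
      rw [Cube.vol, hJr]
      congr 1
      ring
    have hJvol0 : 0 < J.vol := by rw [hJvol]; positivity
    have hV0 : ENNReal.ofReal J.vol ≠ 0 := (ENNReal.ofReal_pos.mpr hJvol0).ne'
    have hVt : ENNReal.ofReal J.vol ≠ ∞ := ENNReal.ofReal_ne_top
    have hσJ : σ J.set ≠ ∞ := (cube_meas_lt_top σ J).ne
    have hap := ap_bound hp ω σ J
    have key1 : ω J.set * σ J.set ^ p ≤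
        (Ap p ω σ) ^ p * (ENNReal.ofReal J.vol ^ p * σ J.set) :=
      mul_rpow_le hp hσJ hV0 hVt hap
    have hrev : ω I.set ≤ ENNReal.ofReal (((1+δω)^(m+1))⁻¹) * ω J.set := by
      have h1 := omega_iter hδω.le hrω I (m+1)
      have h2 := mul_le_mul_right h1 (ENNReal.ofReal (((1+δω)^(m+1))⁻¹))
      rw [← mul_assoc, ← ENNReal.ofReal_mul (by positivity),
        inv_mul_cancel₀ (by positivity), ENNReal.ofReal_one, one_mul] at h2
      exact h2
    have hdbl : σ J.set ≤ ENNReal.ofReal (Kσ^(m+1)) * σ I.set := sigma_iter hKσ.le hdσ I (m+1)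
    have hvp : v m ^ p = ENNReal.ofReal ((c m / β^m)^p) * σ J.set ^ p := by
      rw [hv, ENNReal.mul_rpow_of_nonneg _ _ hp0.le,
        ENNReal.ofReal_rpow_of_pos (by positivity)]
    -- scalar computation
    have hw0 : (0:ℝ) < ((2:ℝ)^n * β)⁻¹ := by positivity
    have hscalar : (c m / β^m)^p * (((1+δω)^(m+1))⁻¹ * (J.vol^p * Kσ^(m+1))) = E * ρ^m := by
      have hkey : c m / β^m * J.vol = 32^n * (((2:ℝ)^n * β)⁻¹)^m := by
        simp only [hc, hJvol]
        have hab : 8/((4:ℝ)^m*I.r) * (2^(m+2)*I.r) = 32/2^m := by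
          rw [show (4:ℝ) = 2^2 by norm_num]
          field_simp
          rw [← pow_mul]
          ring
        rw [div_mul_eq_mul_div, ← mul_pow, hab, div_pow, ← pow_mul, mul_comm m n, pow_mul]
        have hne1 : ((2:ℝ)^n)^m ≠ 0 := by positivity
        have hne2 : β^m ≠ 0 := by positivity
        have hne3 : (2:ℝ)^n * β ≠ 0 := by positivity
        field_simp
        ring_nf
        simp [← mul_pow, hβ0.ne']
      have hwm : ((c m / β^m) * J.vol)^p = ((32:ℝ)^n)^p * ((((2:ℝ)^n * β)⁻¹)^p)^m := by
        rw [hkey, Real.mul_rpow (by positivity) (by positivity)]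
        congr 1
        rw [← Real.rpow_natCast (((2:ℝ)^n * β)⁻¹) m, ← Real.rpow_mul hw0.le,
          mul_comm (m:ℝ) p, Real.rpow_mul hw0.le, Real.rpow_natCast]
      have hwp : (((2:ℝ)^n * β)⁻¹)^p * (Kσ/(1+δω)) = ρ := by
        have hA : ((2:ℝ)^n)^p ≠ 0 := h2np0.ne'
        have hd0 : (1+δω) ≠ 0 := hδ.ne'
        have hρne : ρ ≠ 0 := hρ0.ne'
        have hρρ : ρ * ρ = t := by
          rw [hρ, ← Real.rpow_add ht0]; norm_num
        have h1 : Kσ/(1+δω) = t * ((2:ℝ)^n)^p := by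
          rw [ht]; field_simp
        rw [Real.inv_rpow (by positivity), Real.mul_rpow (by positivity) hβ0.le, hβp, h1,
          ← hρρ]
        field_simp
      have expand : (c m / β^m)^p * J.vol^p = ((c m / β^m) * J.vol)^p := by
        rw [Real.mul_rpow (by positivity) hJvol0.le]
      calc (c m / β^m)^p * (((1+δω)^(m+1))⁻¹ * (J.vol^p * Kσ^(m+1)))
          = ((c m / β^m)^p * J.vol^p) * (Kσ^(m+1) * ((1+δω)^(m+1))⁻¹) := by ring
        _ = (((32:ℝ)^n)^p * ((((2:ℝ)^n * β)⁻¹)^p)^m) * ((Kσ/(1+δω))^(m+1)) := by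
            rw [expand, hwm, div_pow]
            field_simp
        _ = (((32:ℝ)^n)^p * (Kσ/(1+δω))) * (((((2:ℝ)^n * β)⁻¹)^p * (Kσ/(1+δω)))^m) := by
            rw [mul_pow, pow_succ]
            ring
        _ = E * ρ^m := by rw [hE, hwp]
    calc ω I.set * v m ^ p
        = ENNReal.ofReal ((c m / β^m)^p) * (ω I.set * σ J.set ^ p) := by
          rw [hvp]; ring
      _ ≤ ENNReal.ofReal ((c m / β^m)^p) *
            ((ENNReal.ofReal (((1+δω)^(m+1))⁻¹) * ω J.set) * σ J.set ^ p) := by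
          apply mul_le_mul_right
          exact mul_le_mul_left hrev _
      _ = ENNReal.ofReal ((c m / β^m)^p) * ENNReal.ofReal (((1+δω)^(m+1))⁻¹) *
            (ω J.set * σ J.set ^ p) := by ring
      _ ≤ ENNReal.ofReal ((c m / β^m)^p) * ENNReal.ofReal (((1+δω)^(m+1))⁻¹) *
            ((Ap p ω σ) ^ p * (ENNReal.ofReal J.vol ^ p * σ J.set)) :=
          mul_le_mul_right key1 _
      _ ≤ ENNReal.ofReal ((c m / β^m)^p) * ENNReal.ofReal (((1+δω)^(m+1))⁻¹) *
            ((Ap p ω σ) ^ p * (ENNReal.ofReal J.vol ^ p *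
              (ENNReal.ofReal (Kσ^(m+1)) * σ I.set))) := by
          apply mul_le_mul_right
          apply mul_le_mul_right
          exact mul_le_mul_right hdbl _
      _ = ENNReal.ofReal ((c m / β^m)^p) * ENNReal.ofReal (((1+δω)^(m+1))⁻¹) *
            ENNReal.ofReal (J.vol^p) * ENNReal.ofReal (Kσ^(m+1)) *
            (Ap p ω σ) ^ p * σ I.set := by
          rw [ENNReal.ofReal_rpow_of_pos hJvol0]
          ring
      _ = ENNReal.ofReal (E * ρ^m) * (Ap p ω σ) ^ p * σ I.set := by
          rw [← ENNReal.ofReal_mul (by positivity), ← ENNReal.ofReal_mul (by positivity),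
            ← ENNReal.ofReal_mul (by positivity)]
          congr 3
          rw [← hscalar]
          ring
  -- sum up
  have hsumT : ∑' m, ENNReal.ofReal (E * ρ^m) = H := by
    rw [hH]
    have : ∀ m : ℕ, ENNReal.ofReal (E * ρ^m) = ENNReal.ofReal E * ENNReal.ofReal ρ ^ m := by
      intro m
      rw [ENNReal.ofReal_mul hE0.le, ← ENNReal.ofReal_pow hρ0.le]
    rw [tsum_congr this, ENNReal.tsum_mul_left, ENNReal.tsum_geometric]
  calc ω I.set * poisson I σ ^ p
      ≤ ω I.set * S ^ p :=
        mul_le_mul_right (ENNReal.rpow_le_rpow hP hp0.le) _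
    _ ≤ ω I.set * ((∑' m, v m ^ p) * G ^ (p-1)) := mul_le_mul_right hSp _
    _ = G ^ (p-1) * ∑' m, ω I.set * v m ^ p := by
        rw [ENNReal.tsum_mul_left]
        ring
    _ ≤ G ^ (p-1) * ∑' m, ENNReal.ofReal (E * ρ^m) * (Ap p ω σ) ^ p * σ I.set := by
        apply mul_le_mul_right
        exact ENNReal.tsum_le_tsum hterm
    _ = G ^ (p-1) * H * (Ap p ω σ) ^ p * σ I.set := by
        have : ∀ m : ℕ, ENNReal.ofReal (E * ρ^m) * (Ap p ω σ) ^ p * σ I.set =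
            ENNReal.ofReal (E * ρ^m) * ((Ap p ω σ) ^ p * σ I.set) := fun m => by ring
        rw [tsum_congr this, ENNReal.tsum_mul_right, hsumT]
        ring

end S13

/-- If `ω, σ` are doubling with doubling constants `K_ω, K_σ` and reverse
doubling constants `1+δ_ω, 1+δ_σ`, and `K_σ < 2^p (1+δ_ω)`, then the classical `A_p(ω,σ)`
characteristic controls the pivotal condition. -/
theorem stmt_13 (n : ℕ) (hn : 0 < n) (p : ℝ) (hp : 1 < p)
    (ω σ : Measure (Fin n → ℝ)) [IsLocallyFiniteMeasure ω] [IsLocallyFiniteMeasure σ]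
    (Kω Kσ δω δσ : ℝ) (hKω : 0 < Kω) (hKσ : 0 < Kσ) (hδω : 0 < δω) (hδσ : 0 < δσ)
    (hdω : ∀ I : Cube n, ω I.double.set ≤ ENNReal.ofReal Kω * ω I.set)
    (hdσ : ∀ I : Cube n, σ I.double.set ≤ ENNReal.ofReal Kσ * σ I.set)
    (hrω : ∀ I : Cube n, ENNReal.ofReal (1 + δω) * ω I.set ≤ ω I.double.set)
    (hrσ : ∀ I : Cube n, ENNReal.ofReal (1 + δσ) * σ I.set ≤ σ I.double.set)
    (hsmall : Kσ < (2:ℝ) ^ p * (1 + δω)) :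
    ∃ C > (0:ℝ), ∀ I₀ : Cube n, ∀ Ir : ℕ → Cube n,
      (Pairwise fun r s => Disjoint (Ir r).set (Ir s).set) →
      (⋃ r, (Ir r).set) = I₀.set →
      ∑' r, ω (Ir r).set * (poisson (Ir r) (σ.restrict I₀.set)) ^ p ≤
        ENNReal.ofReal C * Ap p ω σ * σ I₀.set := by
  have hp0 : (0:ℝ) < p := by linarith
  obtain ⟨K, hK, hcore⟩ := S13.core hn hp ω σ hKσ hδω hdσ hrω hsmall
  by_cases hAp : Ap p ω σ = ∞
  · refine ⟨1, one_pos, ?_⟩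
    intro I₀ Ir hdisj hunion
    by_cases h0 : σ I₀.set = 0
    · have hz : ∀ r, ω (Ir r).set * poisson (Ir r) (σ.restrict I₀.set) ^ p = 0 := by
        intro r
        have hres : σ.restrict I₀.set = 0 := Measure.restrict_eq_zero.mpr h0
        rw [poisson, hres, lintegral_zero_measure, ENNReal.zero_rpow_of_pos hp0, mul_zero]
      simp only [hz, tsum_zero]
      exact zero_le
    · rw [hAp]
      have hrhs : ENNReal.ofReal 1 * (∞ : ℝ≥0∞) * σ I₀.set = ∞ := by
        rw [ENNReal.ofReal_one, one_mul, ENNReal.top_mul h0]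
      rw [hrhs]
      exact le_top
  · set D := K * (Ap p ω σ) ^ (p-1) with hD
    have hDt : D ≠ ∞ :=
      ENNReal.mul_ne_top hK (ENNReal.rpow_ne_top_of_nonneg (by linarith) hAp)
    have hD0 : (0:ℝ) ≤ D.toReal := ENNReal.toReal_nonneg
    refine ⟨D.toReal + 1, by linarith, ?_⟩
    intro I₀ Ir hdisj hunion
    have hsum : ∑' r, σ (Ir r).set = σ I₀.set := by
      rw [← hunion]
      exact (measure_iUnion hdisj (fun r => S13.measurableSet_cube _)).symm
    have hle : ∀ r, ω (Ir r).set * poisson (Ir r) (σ.restrict I₀.set) ^ p ≤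
        K * (Ap p ω σ) ^ p * σ (Ir r).set := by
      intro r
      refine le_trans ?_ (hcore (Ir r))
      apply mul_le_mul_right
      apply ENNReal.rpow_le_rpow _ hp0.le
      exact lintegral_mono' Measure.restrict_le_self (le_refl _)
    have hKAp : K * (Ap p ω σ) ^ p * σ I₀.set ≤
        ENNReal.ofReal (D.toReal + 1) * Ap p ω σ * σ I₀.set := by
      apply mul_le_mul_left
      by_cases hA0 : Ap p ω σ = 0
      · rw [hA0, ENNReal.zero_rpow_of_pos hp0, mul_zero]
        exact zero_le
      · have hsplit : (Ap p ω σ) ^ p = (Ap p ω σ) ^ (p-1) * (Ap p ω σ) ^ (1:ℝ) := by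
          rw [← ENNReal.rpow_add _ _ hA0 hAp]; norm_num
        rw [hsplit, ENNReal.rpow_one, ← mul_assoc]
        apply mul_le_mul_left
        calc K * (Ap p ω σ) ^ (p-1) = D := hD.symm
          _ ≤ ENNReal.ofReal (D.toReal + 1) :=
              le_trans (le_of_eq (ENNReal.ofReal_toReal hDt).symm)
                (ENNReal.ofReal_le_ofReal (by linarith))
    calc ∑' r, ω (Ir r).set * poisson (Ir r) (σ.restrict I₀.set) ^ p
        ≤ ∑' r, K * (Ap p ω σ) ^ p * σ (Ir r).set := ENNReal.tsum_le_tsum hle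
      _ = K * (Ap p ω σ) ^ p * σ I₀.set := by rw [ENNReal.tsum_mul_left, hsum]
      _ ≤ ENNReal.ofReal (D.toReal + 1) * Ap p ω σ * σ I₀.set := hKAp
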